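/- Let n be an odd positive integer. For j ∈ {1,3,5,7}, let A_j be the set of integers k with 1 ≤ k ≤ 4n, gcd(k,2n) = 1 and k ≡ j (mod 8), and let B_j be the set of integers k with 4n+1 ≤ k ≤ 8n, gcd(k,2n) = 1 and k ≡ j (mod 8). Then |A_1| = |A_3| = |B_5| = |B_7| and |A_5| = |A_7| = |B_1| = |B_3|, and moreover |A_j| + |B_j| = φ(n) for each j ∈ {1,3,5,7}. -/

import Mathlib

/-- The set `A_j` of integers `1 ≤ k ≤ 4n` with `gcd(k, 2n) = 1` and `k ≡ j (mod 8)`. -/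
def Aset (n j : ℕ) : Finset ℕ :=
  (Finset.Icc 1 (4 * n)).filter (fun k => Nat.gcd k (2 * n) = 1 ∧ k % 8 = j)

/-- The set `B_j` of integers `4n+1 ≤ k ≤ 8n` with `gcd(k, 2n) = 1` and `k ≡ j (mod 8)`. -/
def Bset (n j : ℕ) : Finset ℕ :=
  (Finset.Icc (4 * n + 1) (8 * n)).filter (fun k => Nat.gcd k (2 * n) = 1 ∧ k % 8 = j)

private lemma gcd_sub_aux {n k : ℕ} (hk : k ≤ 4 * n) (h : Nat.gcd k (2 * n) = 1) :
    Nat.gcd (4 * n - k) (2 * n) = 1 := by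
  set d := Nat.gcd (4 * n - k) (2 * n) with hd
  have d4 : d ∣ 4 * n := (Nat.gcd_dvd_right _ _).trans ⟨2, by ring⟩
  have dk : d ∣ k := by
    have := Nat.dvd_sub d4 (Nat.gcd_dvd_left (4 * n - k) (2 * n))
    rwa [Nat.sub_sub_self hk] at this
  have : d ∣ Nat.gcd k (2 * n) := Nat.dvd_gcd dk (Nat.gcd_dvd_right _ _)
  rw [h] at this
  exact Nat.dvd_one.mp this

private lemma gcd_sub_aux' {n k : ℕ} (hk : 4 * n ≤ k) (h : Nat.gcd k (2 * n) = 1) :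
    Nat.gcd (k - 4 * n) (2 * n) = 1 := by
  set d := Nat.gcd (k - 4 * n) (2 * n) with hd
  have d4 : d ∣ 4 * n := (Nat.gcd_dvd_right _ _).trans ⟨2, by ring⟩
  have dk : d ∣ k := by
    have := Nat.dvd_add (Nat.gcd_dvd_left (k - 4 * n) (2 * n)) d4
    rwa [Nat.sub_add_cancel hk] at this
  have : d ∣ Nat.gcd k (2 * n) := Nat.dvd_gcd dk (Nat.gcd_dvd_right _ _)
  rw [h] at this
  exact Nat.dvd_one.mp this

private lemma aux_memA {n j j' : ℕ} (hn : 0 < n) (hn2 : n % 2 = 1)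
    (hj : j < 8) (hj2 : j % 2 = 1) (hj' : j' < 8) (hjj : (j + j') % 8 = 4)
    {k : ℕ} (hk : k ∈ Aset n j) : 4 * n - k ∈ Aset n j' := by
  simp only [Aset, Finset.mem_filter, Finset.mem_Icc] at hk ⊢
  obtain ⟨⟨h1, h2⟩, hg, hm⟩ := hk
  exact ⟨⟨by omega, by omega⟩, gcd_sub_aux h2 hg, by omega⟩

/-- The bijection `k ↦ 4n - k` between `A_j` and `A_{(4-j) mod 8}`. -/
private lemma cardAA {n : ℕ} (hn : 0 < n) (hn2 : n % 2 = 1) {j j' : ℕ}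
    (hj : j < 8) (hj2 : j % 2 = 1) (hj' : j' < 8) (hj'2 : j' % 2 = 1)
    (hjj : (j + j') % 8 = 4) :
    (Aset n j).card = (Aset n j').card := by
  refine Finset.card_nbij' (fun k => 4 * n - k) (fun k => 4 * n - k)
    (fun k hk => aux_memA hn hn2 hj hj2 hj' hjj hk)
    (fun k hk => aux_memA hn hn2 hj' hj'2 hj (by omega) hk) ?_ ?_
  · intro k hk
    simp only [Aset, Finset.mem_coe, Finset.mem_filter, Finset.mem_Icc] at hk
    show 4 * n - (4 * n - k) = k
    omega
  · intro k hk
    simp only [Aset, Finset.mem_coe, Finset.mem_filter, Finset.mem_Icc] at hk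
    show 4 * n - (4 * n - k) = k
    omega

/-- The bijection `k ↦ k + 4n` between `A_j` and `B_{(j+4) mod 8}`. -/
private lemma cardAB {n : ℕ} (hn : 0 < n) (hn2 : n % 2 = 1) {j j' : ℕ}
    (hj : j < 8) (hj2 : j % 2 = 1) (hjj : (j + 4) % 8 = j') :
    (Aset n j).card = (Bset n j').card := by
  refine Finset.card_nbij' (fun k => k + 4 * n) (fun k => k - 4 * n) ?_ ?_ ?_ ?_
  · intro k hk
    simp only [Aset, Bset, Finset.mem_coe, Finset.mem_filter, Finset.mem_Icc] at hk ⊢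
    obtain ⟨⟨h1, h2⟩, hg, hm⟩ := hk
    refine ⟨⟨by omega, by omega⟩, ?_, by omega⟩
    calc Nat.gcd (k + 4 * n) (2 * n) = Nat.gcd (k + 2 * (2 * n)) (2 * n) := by ring_nf
      _ = Nat.gcd k (2 * n) := Nat.gcd_add_mul_right_left (2 * n) k 2
      _ = 1 := hg
  · intro k hk
    simp only [Aset, Bset, Finset.mem_coe, Finset.mem_filter, Finset.mem_Icc] at hk ⊢
    obtain ⟨⟨h1, h2⟩, hg, hm⟩ := hk
    exact ⟨⟨by omega, by omega⟩, gcd_sub_aux' (by omega) hg, by omega⟩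
  · intro k hk
    show k + 4 * n - 4 * n = k
    omega
  · intro k hk
    simp only [Bset, Finset.mem_coe, Finset.mem_filter, Finset.mem_Icc] at hk
    show k - 4 * n + 4 * n = k
    omega

private lemma cardS {n : ℕ} (hn : 0 < n) (hn2 : n % 2 = 1) {j : ℕ}
    (hj : j < 8) (hj2 : j % 2 = 1) :
    (Aset n j).card + (Bset n j).card = Nat.totient n := by
  have cop2 : Nat.Coprime 2 n := by
    rw [Nat.Prime.coprime_iff_not_dvd Nat.prime_two]
    omega
  have cop8 : Nat.Coprime 8 n := by
    have := Nat.Coprime.pow_left 3 cop2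
    norm_num at this
    exact this
  set S : Finset ℕ := (Finset.Icc 1 (8 * n)).filter
    (fun k => Nat.gcd k (2 * n) = 1 ∧ k % 8 = j) with hS
  have hdisj : Disjoint (Aset n j) (Bset n j) := by
    rw [Finset.disjoint_left]
    intro k hk hk'
    simp only [Aset, Bset, Finset.mem_filter, Finset.mem_Icc] at hk hk'
    omega
  have hunion : Aset n j ∪ Bset n j = S := by
    ext k
    simp only [Aset, Bset, hS, Finset.mem_union, Finset.mem_filter, Finset.mem_Icc]
    constructor
    · rintro (⟨h1, h2⟩ | ⟨h1, h2⟩) <;> exact ⟨by omega, h2⟩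
    · rintro ⟨h1, h2⟩
      rcases le_or_gt k (4 * n) with h | h
      · exact Or.inl ⟨⟨h1.1, h⟩, h2⟩
      · exact Or.inr ⟨⟨by omega, h1.2⟩, h2⟩
  rw [← Finset.card_union_of_disjoint hdisj, hunion]
  rw [Nat.totient]
  refine Finset.card_nbij (fun k => k % n) ?_ ?_ ?_
  · intro k hk
    simp only [hS, Finset.mem_coe, Finset.mem_filter, Finset.mem_Icc] at hk
    obtain ⟨⟨h1, h2⟩, hg, hm⟩ := hk
    have hkn : Nat.Coprime k n := (Nat.coprime_mul_iff_right.mp hg).2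
    refine Finset.mem_filter.mpr ⟨Finset.mem_range.mpr (Nat.mod_lt _ hn), ?_⟩
    have h3 : Nat.gcd (k % n) n = 1 := by
      rw [← Nat.gcd_rec]; exact Nat.coprime_comm.mp hkn
    exact Nat.coprime_comm.mp h3
  · intro a ha b hb hab
    rw [Finset.mem_coe] at ha hb
    simp only [hS, Finset.mem_filter, Finset.mem_Icc] at ha hb
    obtain ⟨⟨ha1, ha2⟩, hga, hma⟩ := ha
    obtain ⟨⟨hb1, hb2⟩, hgb, hmb⟩ := hb
    have m8 : a ≡ b [MOD 8] := show a % 8 = b % 8 by omega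
    have mn : a ≡ b [MOD n] := hab
    have m8n : a ≡ b [MOD 8 * n] :=
      (Nat.modEq_and_modEq_iff_modEq_mul cop8).mp ⟨m8, mn⟩
    have h8n : a % (8 * n) = b % (8 * n) := m8n
    have ha' : a % (8 * n) = a := Nat.mod_eq_of_lt (by omega)
    have hb' : b % (8 * n) = b := Nat.mod_eq_of_lt (by omega)
    omega
  · intro m hm
    rw [Finset.mem_coe, Finset.mem_filter, Finset.mem_range] at hm
    obtain ⟨hm1, hm2⟩ := hm
    obtain ⟨c, hc8, hcn⟩ := Nat.chineseRemainder cop8 j m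
    set k := c % (8 * n) with hkdef
    have hc8' : c % 8 = j % 8 := hc8
    have hcn' : c % n = m % n := hcn
    have h8 : k % 8 = j := by
      have h1 : k % 8 = c % 8 := Nat.mod_mod_of_dvd c ⟨n, rfl⟩
      omega
    have hkn : k % n = m := by
      have h1 : k % n = c % n := Nat.mod_mod_of_dvd c ⟨8, by ring⟩
      rw [h1, hcn', Nat.mod_eq_of_lt hm1]
    have hk1 : k < 8 * n := Nat.mod_lt _ (by omega)
    have ck2 : Nat.Coprime k 2 := by
      rw [Nat.coprime_comm, Nat.Prime.coprime_iff_not_dvd Nat.prime_two]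
      omega
    have ckn : Nat.Coprime k n := by
      have h3 : Nat.gcd n k = 1 := by
        rw [Nat.gcd_rec n k, hkn]; exact Nat.coprime_comm.mp hm2
      exact Nat.coprime_comm.mp h3
    have hgk : Nat.gcd k (2 * n) = 1 := ck2.mul_right ckn
    refine ⟨k, ?_, hkn⟩
    rw [Finset.mem_coe]
    simp only [hS, Finset.mem_filter, Finset.mem_Icc]
    exact ⟨⟨by omega, by omega⟩, hgk, h8⟩

theorem AB_card_symmetries (n : ℕ) (hn : 0 < n) (hodd : Odd n) :
    ((Aset n 1).card = (Aset n 3).card ∧ (Aset n 3).card = (Bset n 5).card ∧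
      (Bset n 5).card = (Bset n 7).card) ∧
    ((Aset n 5).card = (Aset n 7).card ∧ (Aset n 7).card = (Bset n 1).card ∧
      (Bset n 1).card = (Bset n 3).card) ∧
    (∀ j ∈ ({1, 3, 5, 7} : Finset ℕ),
      (Aset n j).card + (Bset n j).card = Nat.totient n) := by
  have hn2 : n % 2 = 1 := Nat.odd_iff.mp hodd
  have h13 : (Aset n 1).card = (Aset n 3).card :=
    cardAA hn hn2 (by norm_num) (by norm_num) (by norm_num) (by norm_num) (by norm_num)
  have h57 : (Aset n 5).card = (Aset n 7).card :=
    cardAA hn hn2 (by norm_num) (by norm_num) (by norm_num) (by norm_num) (by norm_num)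
  have h15 : (Aset n 1).card = (Bset n 5).card :=
    cardAB hn hn2 (by norm_num) (by norm_num) (by norm_num)
  have h37 : (Aset n 3).card = (Bset n 7).card :=
    cardAB hn hn2 (by norm_num) (by norm_num) (by norm_num)
  have h51 : (Aset n 5).card = (Bset n 1).card :=
    cardAB hn hn2 (by norm_num) (by norm_num) (by norm_num)
  have h73 : (Aset n 7).card = (Bset n 3).card :=
    cardAB hn hn2 (by norm_num) (by norm_num) (by norm_num)
  refine ⟨⟨h13, h13.symm.trans h15, ?_⟩, ⟨h57, h57.symm.trans h51, ?_⟩, ?_⟩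
  · exact h15.symm.trans (h13.trans h37)
  · exact h51.symm.trans (h57.trans h73)
  · intro j hj
    fin_cases hj <;> exact cardS hn hn2 (by norm_num) (by norm_num)
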